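/- For every integer M ≥ 2 and residue r ∈ {0,1,...,M-1}, the ratio (Σ_{k ≡ r mod M, 0 ≤ k ≤ n} C(n,k)) / 2^n converges to 1/M as n → ∞. -/

import Mathlib

open Finset Filter Complex

theorem binomial_residue_density (M : ℕ) (hM : 2 ≤ M) (r : ℕ) (hr : r < M) :
    Filter.Tendsto
      (fun n : ℕ =>
        (∑ k ∈ Finset.range (n + 1), if k % M = r then ((n.choose k : ℝ)) else 0) / 2 ^ n)
      Filter.atTop (nhds (1 / M)) := by
  have hM0 : (M : ℂ) ≠ 0 := Nat.cast_ne_zero.mpr (by omega)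
  set ζ : ℂ := Complex.exp (2 * Real.pi * Complex.I / M) with hζdef
  have hζ : IsPrimitiveRoot ζ M := Complex.isPrimitiveRoot_exp M (by omega)
  have hζM : ζ ^ M = 1 := hζ.pow_eq_one
  have habs1 : ‖ζ‖ = 1 := by
    exact Complex.norm_eq_one_of_pow_eq_one hζM (by omega)
  have hζnorm : ∀ j : ℕ, ‖ζ ^ j‖ = 1 := fun j => by
    rw [norm_pow, habs1, one_pow]
  -- divisibility criterion
  have hdvd : ∀ k : ℕ, (M ∣ k + (M - r)) ↔ k % M = r := by
    intro k
    constructor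
    · rintro ⟨c, hc⟩
      rcases c with _ | c
      · omega
      · have hc' : k = M * c + r := by
          rw [Nat.mul_succ] at hc; omega
        rw [hc', Nat.mul_add_mod, Nat.mod_eq_of_lt hr]
    · intro h
      refine ⟨k / M + 1, ?_⟩
      have := Nat.div_add_mod k M
      rw [Nat.mul_add, Nat.mul_one]
      omega
  -- roots of unity filter
  have hsum : ∀ m : ℕ, (∑ j ∈ range M, (ζ ^ m) ^ j) = if M ∣ m then (M : ℂ) else 0 := by
    intro m
    by_cases h : M ∣ m
    · obtain ⟨c, rfl⟩ := h
      rw [if_pos ⟨c, rfl⟩]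
      simp [pow_mul, hζM]
    · have hne : ζ ^ m ≠ 1 := fun h1 => h ((hζ.pow_eq_one_iff_dvd m).mp h1)
      rw [geom_sum_eq hne M, ← pow_mul, mul_comm m M, pow_mul, hζM, one_pow]
      simp [h]
  -- the key identity
  have key : ∀ n : ℕ,
      ((∑ k ∈ range (n + 1), if k % M = r then ((n.choose k : ℝ)) else 0 : ℝ) : ℂ)
        = (M : ℂ)⁻¹ * ∑ j ∈ range M, ζ ^ (j * (M - r)) * (1 + ζ ^ j) ^ n := by
    intro n
    have hcast : ((∑ k ∈ range (n + 1), if k % M = r then ((n.choose k : ℝ)) else 0 : ℝ) : ℂ)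
        = ∑ k ∈ range (n + 1), if k % M = r then ((n.choose k : ℂ)) else 0 := by
      push_cast [apply_ite (fun x : ℝ => (x : ℂ))]
      rfl
    rw [hcast]
    have step1 : ∀ k : ℕ, (if k % M = r then ((n.choose k : ℂ)) else 0)
        = (M : ℂ)⁻¹ * ∑ j ∈ range M, (n.choose k : ℂ) * (ζ ^ (k + (M - r))) ^ j := by
      intro k
      rw [← Finset.mul_sum, hsum]
      by_cases h : M ∣ k + (M - r)
      · rw [if_pos h, if_pos ((hdvd k).mp h)]
        field_simp
      · rw [if_neg h, if_neg (fun hk => h ((hdvd k).mpr hk))]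
        simp
    calc (∑ k ∈ range (n + 1), if k % M = r then ((n.choose k : ℂ)) else 0)
        = ∑ k ∈ range (n + 1), (M : ℂ)⁻¹ *
            ∑ j ∈ range M, (n.choose k : ℂ) * (ζ ^ (k + (M - r))) ^ j := by
          exact Finset.sum_congr rfl fun k _ => step1 k
      _ = (M : ℂ)⁻¹ * ∑ j ∈ range M,
            ∑ k ∈ range (n + 1), (n.choose k : ℂ) * (ζ ^ (k + (M - r))) ^ j := by
          rw [← Finset.mul_sum, Finset.sum_comm]
      _ = (M : ℂ)⁻¹ * ∑ j ∈ range M, ζ ^ (j * (M - r)) * (1 + ζ ^ j) ^ n := by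
          congr 1
          refine Finset.sum_congr rfl fun j _ => ?_
          have hpow : ∀ k : ℕ, (ζ ^ (k + (M - r))) ^ j = ζ ^ (j * (M - r)) * (ζ ^ j) ^ k := by
            intro k
            rw [← pow_mul, ← pow_mul, ← pow_add]
            congr 1
            ring
          calc (∑ k ∈ range (n + 1), (n.choose k : ℂ) * (ζ ^ (k + (M - r))) ^ j)
              = ζ ^ (j * (M - r)) *
                  ∑ k ∈ range (n + 1), (ζ ^ j) ^ k * 1 ^ (n - k) * (n.choose k : ℂ) := by
                rw [Finset.mul_sum]
                refine Finset.sum_congr rfl fun k _ => ?_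
                rw [hpow k]
                ring
            _ = ζ ^ (j * (M - r)) * (1 + ζ ^ j) ^ n := by
                rw [← add_pow, add_comm]
  -- norm bound
  have hlt : ∀ j ∈ (range M).erase 0, ‖(1 + ζ ^ j) / 2‖ < 1 := by
    intro j hj
    rw [Finset.mem_erase, Finset.mem_range] at hj
    have hne : ζ ^ j ≠ 1 := hζ.pow_ne_one_of_pos_of_lt hj.1 hj.2
    set z := ζ ^ j with hz
    have habs : ‖z‖ = 1 := hζnorm j
    have hnsq : z.re * z.re + z.im * z.im = 1 := by
      have h1 : Complex.normSq z = 1 := by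
        rw [← Complex.sq_norm, habs]; norm_num
      simpa [Complex.normSq_apply] using h1
    have hre : z.re < 1 := by
      rcases lt_or_eq_of_le (habs ▸ Complex.re_le_norm z) with h | h
      · exact h
      · exfalso
        apply hne
        have him : z.im = 0 := by nlinarith
        apply Complex.ext <;> simp [h, him]
    have h2 : ‖1 + z‖ < 2 := by
      have hsq : (‖1 + z‖) ^ 2 < 2 ^ 2 := by
        rw [Complex.sq_norm, Complex.normSq_apply]
        simp only [Complex.add_re, Complex.add_im, Complex.one_re, Complex.one_im]
        nlinarith
      nlinarith [norm_nonneg (1 + z)]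
    rw [norm_div]
    simp only [Complex.norm_two]
    linarith
  -- complex limit
  have hC : Tendsto
      (fun n : ℕ => (M : ℂ)⁻¹ * ∑ j ∈ range M, ζ ^ (j * (M - r)) * ((1 + ζ ^ j) / 2) ^ n)
      atTop (nhds ((M : ℂ)⁻¹)) := by
    have hterm : ∀ j ∈ range M, Tendsto (fun n : ℕ => ζ ^ (j * (M - r)) * ((1 + ζ ^ j) / 2) ^ n)
        atTop (nhds (if j = 0 then 1 else 0)) := by
      intro j hj
      by_cases h0 : j = 0
      · subst h0
        have hfun : (fun n : ℕ => ζ ^ (0 * (M - r)) * ((1 + ζ ^ 0) / 2) ^ n)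
            = fun _ : ℕ => (1 : ℂ) := by
          funext n; norm_num
        rw [if_pos rfl, hfun]
        exact tendsto_const_nhds
      · rw [if_neg h0]
        have hmem : j ∈ (range M).erase 0 := Finset.mem_erase.mpr ⟨h0, hj⟩
        have hnlt : ‖(1 + ζ ^ j) / 2‖ < 1 := by
          exact hlt j hmem
        have := tendsto_pow_atTop_nhds_zero_of_norm_lt_one hnlt
        simpa using this.const_mul (ζ ^ (j * (M - r)))
    have hsumT := tendsto_finset_sum (range M) hterm
    have hval : (∑ j ∈ range M, if j = 0 then (1 : ℂ) else 0) = 1 := by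
      rw [Finset.sum_ite_eq' (range M) 0 (fun _ => (1 : ℂ))]
      simp [Finset.mem_range, (by omega : 0 < M)]
    rw [hval] at hsumT
    simpa using hsumT.const_mul ((M : ℂ)⁻¹)
  -- transfer
  have keydiv : ∀ n : ℕ,
      (((∑ k ∈ range (n + 1), if k % M = r then ((n.choose k : ℝ)) else 0) / 2 ^ n : ℝ) : ℂ)
        = (M : ℂ)⁻¹ * ∑ j ∈ range M, ζ ^ (j * (M - r)) * ((1 + ζ ^ j) / 2) ^ n := by
    intro n
    rw [Complex.ofReal_div, key n]
    push_cast
    rw [Finset.mul_sum, Finset.mul_sum, Finset.sum_div]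
    refine Finset.sum_congr rfl fun j _ => ?_
    rw [div_pow]
    ring
  have hre : Tendsto (fun n : ℕ =>
      ((((∑ k ∈ range (n + 1), if k % M = r then ((n.choose k : ℝ)) else 0) / 2 ^ n : ℝ) : ℂ)).re)
      atTop (nhds (((M : ℂ)⁻¹).re)) := by
    simp only [keydiv]
    exact (Complex.continuous_re.tendsto _).comp hC
  simp only [Complex.ofReal_re] at hre
  have hfin : ((M : ℂ)⁻¹).re = 1 / (M : ℝ) := by
    rw [show ((M : ℂ))⁻¹ = (((M : ℝ)⁻¹ : ℝ) : ℂ) by push_cast; ring]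
    simp [one_div]
  rw [hfin] at hre
  exact hre
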